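/- Let G be a pronilpotent profinite group, written as the Cartesian product of its Sylow subgroups. Suppose there exist an open normal subgroup H of G, elements u, v ∈ G, and positive integers n, d such that [u·l, ₙ (v·k)^d] = 1 for all l ∈ H and all k ∈ H. Let π be the (finite) set of primes dividing the index [G : H] together with the primes dividing d, and let T = O_{π'}(G) be the product of the Sylow p-subgroups of G for p ∉ π. Then every element of T is a left n-Engel element of T. -/

import Mathlib

open scoped commutatorElement

/-- Iterated (left) Engel commutator. -/
def engel {G : Type*} [Group G] (g x : G) : ℕ → G
  | 0 => g
  | n + 1 => ⁅engel g x n, x⁆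

section EngelAux

open Subgroup

lemma engel_map {G H : Type*} [Group G] [Group H] (f : G →* H) (g x : G) :
    ∀ n, f (engel g x n) = engel (f g) (f x) n
  | 0 => rfl
  | (n+1) => by rw [engel, engel, map_commutatorElement, engel_map f g x n]

lemma engel_one_left {G : Type*} [Group G] (x : G) : ∀ n, engel 1 x n = 1
  | 0 => rfl
  | (n+1) => by
      rw [engel, engel_one_left x n]
      simp [commutatorElement_def]

lemma comm_split {Q : Type*} [Group Q] (S : Subgroup Q) {a c b e : Q}
    (ha : a ∈ centralizer (S : Set Q)) (hc : c ∈ centralizer (S : Set Q))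
    (hb : b ∈ S) (he : e ∈ S) :
    ⁅a * b, c * e⁆ = ⁅a, c⁆ * ⁅b, e⁆ := by
  have Hs2 : ∀ y ∈ S, ∀ x ∈ centralizer (S : Set Q), y * x = x * y := by
    intro y hy x hx
    exact mem_centralizer_iff.mp hx y hy
  have Hs : ∀ y ∈ S, ∀ x ∈ centralizer (S : Set Q), ∀ z : Q, y * (x * z) = x * (y * z) := by
    intro y hy x hx z
    rw [← mul_assoc, Hs2 y hy x hx, mul_assoc]
  simp only [commutatorElement_def, mul_inv_rev, mul_assoc]
  rw [Hs b hb c hc, Hs _ (inv_mem hb) _ (inv_mem ha), Hs e he _ (inv_mem ha),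
    Hs b hb _ (inv_mem ha), Hs2 _ (inv_mem he) _ (inv_mem hc), Hs _ (inv_mem hb) _ (inv_mem hc),
    Hs e he _ (inv_mem hc), Hs b hb _ (inv_mem hc)]

lemma engel_split {Q : Type*} [Group Q] (S : Subgroup Q) {A B w y : Q}
    (hA : A ∈ centralizer (S : Set Q)) (hw : w ∈ centralizer (S : Set Q))
    (hB : B ∈ S) (hy : y ∈ S) :
    ∀ n, engel (A * B) (w * y) n = engel A w n * engel B y n ∧
      engel A w n ∈ centralizer (S : Set Q) ∧ engel B y n ∈ S
  | 0 => ⟨rfl, hA, hB⟩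
  | (n+1) => by
      obtain ⟨h1, h2, h3⟩ := engel_split S hA hw hB hy n
      refine ⟨?_, ?_, ?_⟩
      · rw [engel, h1, comm_split S h2 hw h3 hy]; rfl
      · rw [engel, commutatorElement_def]
        exact mul_mem (mul_mem (mul_mem h2 hw) (inv_mem h2)) (inv_mem hw)
      · rw [engel, commutatorElement_def]
        exact mul_mem (mul_mem (mul_mem h3 hy) (inv_mem h3)) (inv_mem hy)

lemma nat_split (e : ℕ) : ∀ m : ℕ, m ≠ 0 →
    ∃ m1 m2 : ℕ, m = m1 * m2 ∧ Nat.Coprime m1 m2 ∧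
      (∀ p : ℕ, p.Prime → p ∣ m1 → p ∣ e) ∧ (∀ p : ℕ, p.Prime → p ∣ m2 → ¬ p ∣ e) := by
  intro m
  induction m using Nat.strong_induction_on with
  | _ m ih =>
    intro hm
    by_cases hco : Nat.Coprime m e
    · refine ⟨1, m, (one_mul m).symm, Nat.coprime_one_left m, ?_, ?_⟩
      · intro p hp hpd
        exact absurd (Nat.dvd_one.mp hpd) hp.ne_one
      · intro p hp hpm hpe
        have : p ∣ 1 := hco.gcd_eq_one ▸ Nat.dvd_gcd hpm hpe
        exact hp.ne_one (Nat.dvd_one.mp this)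
    · obtain ⟨p, hp, hpg⟩ :=
        Nat.exists_prime_and_dvd (n := Nat.gcd m e) (fun h => hco h)
      have hpm : p ∣ m := hpg.trans (Nat.gcd_dvd_left m e)
      have hpe : p ∣ e := hpg.trans (Nat.gcd_dvd_right m e)
      set k := m.factorization p with hk
      have hkpos : 0 < k := hp.factorization_pos_of_dvd hm hpm
      set m' := ordCompl[p] m with hm'
      have hmeq : p ^ k * m' = m := Nat.ordProj_mul_ordCompl_eq_self m p
      have hm'0 : m' ≠ 0 := (Nat.ordCompl_pos p hm).ne'
      have hm'lt : m' < m := Nat.div_lt_self (Nat.pos_of_ne_zero hm)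
        (Nat.one_lt_pow hkpos.ne' hp.one_lt)
      obtain ⟨m1', m2', heq, hcop, h1, h2⟩ := ih m' hm'lt hm'0
      have hpn : ¬ p ∣ m2' := by
        intro hdd
        exact h2 p hp hdd hpe
      refine ⟨p ^ k * m1', m2', ?_, ?_, ?_, h2⟩
      · rw [mul_assoc, ← heq, hmeq]
      · exact Nat.Coprime.mul
          (Nat.Coprime.pow_left k ((Nat.Prime.coprime_iff_not_dvd hp).mpr hpn)) hcop
      · intro q hq hqd
        rcases (Nat.Prime.dvd_mul hq).mp hqd with h | h
        · rwa [(Nat.prime_dvd_prime_iff_eq hq hp).mp (hq.dvd_of_dvd_pow h)]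
        · exact h1 q hq h

lemma exists_decomp {Q : Type*} [Group Q] (g : Q) (m1 m2 : ℕ) (hco : Nat.Coprime m1 m2)
    (hord : orderOf g ∣ m1 * m2) :
    ∃ g1 g2 : Q, g = g1 * g2 ∧ orderOf g1 ∣ m1 ∧ orderOf g2 ∣ m2 := by
  obtain ⟨α, β, hab⟩ := Nat.isCoprime_iff_coprime.mpr hco
  have hg : g ^ ((m1 * m2 : ℕ) : ℤ) = 1 := by
    rw [zpow_natCast]
    exact orderOf_dvd_iff_pow_eq_one.mp hord
  refine ⟨g ^ (β * (m2 : ℤ)), g ^ (α * (m1 : ℤ)), ?_, ?_, ?_⟩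
  · rw [← zpow_add, add_comm, hab, zpow_one]
  · rw [orderOf_dvd_iff_pow_eq_one]
    calc (g ^ (β * (m2 : ℤ))) ^ m1 = g ^ (β * (m2 : ℤ) * (m1 : ℤ)) := by
          rw [← zpow_natCast (g ^ (β * (m2 : ℤ))), ← zpow_mul]
      _ = g ^ (((m1 * m2 : ℕ) : ℤ) * β) := by push_cast; ring_nf
      _ = (g ^ ((m1 * m2 : ℕ) : ℤ)) ^ β := by rw [zpow_mul]
      _ = 1 := by rw [hg, one_zpow]
  · rw [orderOf_dvd_iff_pow_eq_one]
    calc (g ^ (α * (m1 : ℤ))) ^ m2 = g ^ (α * (m1 : ℤ) * (m2 : ℤ)) := by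
          rw [← zpow_natCast (g ^ (α * (m1 : ℤ))), ← zpow_mul]
      _ = g ^ (((m1 * m2 : ℕ) : ℤ) * α) := by push_cast; ring_nf
      _ = (g ^ ((m1 * m2 : ℕ) : ℤ)) ^ α := by rw [zpow_mul]
      _ = 1 := by rw [hg, one_zpow]

lemma commute_prime {Q : Type*} [Group Q] [Finite Q] (hnil : Group.IsNilpotent Q)
    {p q : ℕ} (hp : p.Prime) (hq : q.Prime) (hpq : p ≠ q) {g t : Q}
    (hg : ∃ i, orderOf g ∣ p ^ i) (ht : ∃ j, orderOf t ∣ q ^ j) : Commute g t := by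
  haveI hfp := Fact.mk hp
  haveI hfq := Fact.mk hq
  have sylnormal := ((isNilpotent_of_finite_tfae (G := Q)).out 0 3).mp hnil
  obtain ⟨i, hi⟩ := hg
  obtain ⟨i', _, hi'⟩ := (Nat.dvd_prime_pow hp).mp hi
  have hPg : IsPGroup p (Subgroup.zpowers g) :=
    IsPGroup.of_card (by rw [Nat.card_zpowers]; exact hi')
  obtain ⟨P, hP⟩ := hPg.exists_le_sylow
  obtain ⟨j, hj⟩ := ht
  obtain ⟨j', _, hj'⟩ := (Nat.dvd_prime_pow hq).mp hj
  have hQt : IsPGroup q (Subgroup.zpowers t) :=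
    IsPGroup.of_card (by rw [Nat.card_zpowers]; exact hj')
  obtain ⟨R, hR⟩ := hQt.exists_le_sylow
  have hPn : (P : Subgroup Q).Normal := sylnormal p hfp P
  have hRn : (R : Subgroup Q).Normal := sylnormal q hfq R
  have hgP : g ∈ (P : Subgroup Q) := hP (Subgroup.mem_zpowers g)
  have htR : t ∈ (R : Subgroup Q) := hR (Subgroup.mem_zpowers t)
  have hc1 : ⁅g, t⁆ ∈ (P : Subgroup Q) := by
    have hconj : t * g⁻¹ * t⁻¹ ∈ (P : Subgroup Q) := hPn.conj_mem g⁻¹ (inv_mem hgP) t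
    rw [mul_assoc] at hconj
    have := mul_mem hgP hconj
    rw [commutatorElement_def, mul_assoc, mul_assoc]
    exact this
  have hc2 : ⁅g, t⁆ ∈ (R : Subgroup Q) := by
    rw [commutatorElement_def]
    exact mul_mem (hRn.conj_mem t htR g) (inv_mem htR)
  obtain ⟨k, hk⟩ := P.isPGroup' ⟨⁅g, t⁆, hc1⟩
  obtain ⟨l, hl⟩ := R.isPGroup' ⟨⁅g, t⁆, hc2⟩
  have hx1 : ⁅g, t⁆ ^ p ^ k = 1 := by
    have := congrArg Subtype.val hk
    simpa using this
  have hx2 : ⁅g, t⁆ ^ q ^ l = 1 := by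
    have := congrArg Subtype.val hl
    simpa using this
  have hco : Nat.Coprime (p ^ k) (q ^ l) :=
    Nat.Coprime.pow k l ((Nat.coprime_primes hp hq).mpr hpq)
  have : orderOf ⁅g, t⁆ ∣ 1 := by
    rw [← hco.gcd_eq_one]
    exact Nat.dvd_gcd (orderOf_dvd_iff_pow_eq_one.mpr hx1) (orderOf_dvd_iff_pow_eq_one.mpr hx2)
  exact commutatorElement_eq_one_iff_commute.mp (orderOf_eq_one_iff.mp (Nat.dvd_one.mp this))

lemma commute_pprime {Q : Type*} [Group Q] [Finite Q] (hnil : Group.IsNilpotent Q)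
    {p : ℕ} (hp : p.Prime) :
    ∀ m : ℕ, ∀ g t : Q, (∃ i, orderOf g ∣ p ^ i) → orderOf t ∣ m → ¬ p ∣ m → Commute g t := by
  intro m
  induction m using Nat.strong_induction_on with
  | _ m ih =>
    intro g t hg htm hpm
    have hm0 : m ≠ 0 := fun h => hpm (h ▸ dvd_zero p)
    rcases eq_or_ne (orderOf t) 1 with h1 | h1
    · rw [orderOf_eq_one_iff.mp h1]; exact Commute.one_right g
    obtain ⟨q, hq, hqd⟩ := Nat.exists_prime_and_dvd h1
    have hqm : q ∣ m := hqd.trans htm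
    have hqp : q ≠ p := fun h => hpm (h ▸ hqm)
    have hmo0 : orderOf t ≠ 0 := (orderOf_pos t).ne'
    obtain ⟨t1, t2, hteq, ht1, ht2⟩ := exists_decomp t
      (q ^ (orderOf t).factorization q) (ordCompl[q] (orderOf t))
      (Nat.Coprime.pow_left _ (Nat.coprime_ordCompl hq hmo0))
      (by rw [Nat.ordProj_mul_ordCompl_eq_self])
    have hcomm1 : Commute g t1 := commute_prime hnil hp hq hqp.symm hg ⟨_, ht1⟩
    have hlt : orderOf t2 < m := by
      have h2 : orderOf t2 ≤ ordCompl[q] (orderOf t) :=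
        Nat.le_of_dvd (Nat.ordCompl_pos q hmo0) ht2
      have h3 : ordCompl[q] (orderOf t) < orderOf t :=
        Nat.div_lt_self (orderOf_pos t)
          (Nat.one_lt_pow (hq.factorization_pos_of_dvd hmo0 hqd).ne' hq.one_lt)
      exact lt_of_le_of_lt h2 (lt_of_lt_of_le h3 (Nat.le_of_dvd (Nat.pos_of_ne_zero hm0) htm))
    have hcomm2 : Commute g t2 := ih (orderOf t2) hlt g t2 hg dvd_rfl
      (fun hc => hpm ((hc.trans ht2).trans ((Nat.ordCompl_dvd (orderOf t) q).trans htm)))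
    rw [hteq]
    exact hcomm1.mul_right hcomm2

lemma commute_coprime {Q : Type*} [Group Q] [Finite Q] (hnil : Group.IsNilpotent Q) :
    ∀ m : ℕ, ∀ g t : Q, orderOf g ∣ m → m ≠ 0 → Nat.Coprime (orderOf g) (orderOf t) →
      Commute g t := by
  intro m
  induction m using Nat.strong_induction_on with
  | _ m ih =>
    intro g t hgm hm0 hco
    rcases eq_or_ne (orderOf g) 1 with h1 | h1
    · rw [orderOf_eq_one_iff.mp h1]; exact Commute.one_left t
    obtain ⟨p, hp, hpd⟩ := Nat.exists_prime_and_dvd h1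
    have hgo0 : orderOf g ≠ 0 := (orderOf_pos g).ne'
    obtain ⟨g1, g2, hgeq, hg1, hg2⟩ := exists_decomp g
      (p ^ (orderOf g).factorization p) (ordCompl[p] (orderOf g))
      (Nat.Coprime.pow_left _ (Nat.coprime_ordCompl hp hgo0))
      (by rw [Nat.ordProj_mul_ordCompl_eq_self])
    have hpt : ¬ p ∣ orderOf t := by
      intro hc
      have : p ∣ 1 := hco.gcd_eq_one ▸ Nat.dvd_gcd hpd hc
      exact hp.ne_one (Nat.dvd_one.mp this)
    have hcomm1 : Commute g1 t := commute_pprime hnil hp (orderOf t) g1 t ⟨_, hg1⟩ dvd_rfl hpt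
    have hg2o : orderOf g2 ∣ orderOf g := hg2.trans (Nat.ordCompl_dvd (orderOf g) p)
    have hlt : orderOf g2 < m := by
      have h2 : orderOf g2 ≤ ordCompl[p] (orderOf g) :=
        Nat.le_of_dvd (Nat.ordCompl_pos p hgo0) hg2
      have h3 : ordCompl[p] (orderOf g) < orderOf g :=
        Nat.div_lt_self (orderOf_pos g)
          (Nat.one_lt_pow (hp.factorization_pos_of_dvd hgo0 hpd).ne' hp.one_lt)
      exact lt_of_le_of_lt h2 (lt_of_lt_of_le h3 (Nat.le_of_dvd (Nat.pos_of_ne_zero hm0) hgm))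
    have hcomm2 : Commute g2 t := ih (orderOf g2) hlt g2 t dvd_rfl (orderOf_pos g2).ne'
      (Nat.Coprime.coprime_dvd_left hg2o hco)
    rw [hgeq]
    exact hcomm1.mul_left hcomm2

end EngelAux

/-- Let `G` be a pronilpotent profinite group with an open normal subgroup `H`, elements
`u, v` and positive integers `n, d` such that `[u·l, ₙ (v·k)^d] = 1` for all `l, k ∈ H`.
Let `π` consist of the primes dividing `[G : H]` together with those dividing `d`, and let
`T = O_{π'}(G)` (the largest closed normal subgroup all of whose finite quotients have order
coprime to every prime of `π`).  Then every element of `T` is a left `n`-Engel element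
of `T`. -/
theorem stmt14 {G : Type*} [Group G] [TopologicalSpace G] [IsTopologicalGroup G]
    [CompactSpace G] [T2Space G] [TotallyDisconnectedSpace G]
    (hpronil : ∀ (U : Subgroup G) [U.Normal], IsOpen (U : Set G) → Group.IsNilpotent (G ⧸ U))
    (H : Subgroup G) (hHn : H.Normal) (hHo : IsOpen (H : Set G))
    (u v : G) (n d : ℕ) (hn : 0 < n) (hd : 0 < d)
    (hlaw : ∀ l ∈ H, ∀ k ∈ H, engel (u * l) ((v * k) ^ d) n = 1)
    (π : Set ℕ) (hπ : π = {r : ℕ | r.Prime ∧ (r ∣ H.index ∨ r ∣ d)})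
    (T : Subgroup G) (hTn : T.Normal) (hTc : IsClosed (T : Set G))
    (hTπ : ∀ U : Subgroup T, U.Normal → IsOpen (U : Set T) → ∀ r ∈ π, ¬ r ∣ U.index)
    (hTmax : ∀ T' : Subgroup G, T'.Normal → IsClosed (T' : Set G) →
      (∀ U : Subgroup T', U.Normal → IsOpen (U : Set T') → ∀ r ∈ π, ¬ r ∣ U.index) →
      T' ≤ T) :
    ∀ y ∈ T, ∀ x ∈ T, engel x y n = 1 := by
  intro y hy x hx
  classical
  haveI := hHn
  haveI : Finite (G ⧸ H) := H.quotient_finite_of_isOpen hHo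
  haveI : H.FiniteIndex := Subgroup.finiteIndex_of_finite_quotient (H := H)
  have hHind0 : H.index ≠ 0 := Subgroup.FiniteIndex.index_ne_zero
  -- Step A : T ≤ H
  have hTH : T ≤ H := by
    have hnorm : (H.subgroupOf T).Normal := hHn.subgroupOf T
    have hopen : IsOpen ((H.subgroupOf T : Subgroup T) : Set T) := by
      have heq : ((H.subgroupOf T : Subgroup T) : Set T) = Subtype.val ⁻¹' (H : Set G) := rfl
      rw [heq]
      exact hHo.preimage continuous_subtype_val
    have hdvd : (H.subgroupOf T).index ∣ H.index :=
      Subgroup.relIndex_dvd_index_of_normal H T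
    have hone : (H.subgroupOf T).index = 1 := by
      by_contra hne1
      obtain ⟨r, hr, hrd⟩ := Nat.exists_prime_and_dvd hne1
      exact hTπ _ hnorm hopen r (by rw [hπ]; exact ⟨hr, Or.inl (hrd.trans hdvd)⟩) hrd
    exact Subgroup.subgroupOf_eq_top.mp (Subgroup.index_eq_one.mp hone)
  -- Step B : reduce to open normal subgroups
  suffices hU : ∀ U : Subgroup G, U.Normal → IsOpen (U : Set G) → engel x y n ∈ U by
    by_contra hne
    have h1 : (1 : G) ∈ ({engel x y n}ᶜ : Set G) := fun h => hne (Set.mem_singleton_iff.mp h).symm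
    obtain ⟨V, hVclopen, hV1, hVsub⟩ := compact_exists_isClopen_in_isOpen
      (isClosed_singleton (x := engel x y n)).isOpen_compl h1
    obtain ⟨N, hN⟩ :=
      IsTopologicalGroup.exist_openNormalSubgroup_sub_clopen_nhds_of_one hVclopen hV1
    have hmem : engel x y n ∈ (N : Subgroup G) :=
      hU N.toSubgroup inferInstance N.toOpenSubgroup.isOpen
    exact hVsub (hN hmem) rfl
  -- Step C : the finite quotient argument
  intro U hUn hUo
  haveI := hUn
  haveI hfinQ : Finite (G ⧸ U) := U.quotient_finite_of_isOpen hUo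
  have hnilQ : Group.IsNilpotent (G ⧸ U) := hpronil U hUo
  set f := QuotientGroup.mk' U with hf
  have hfs : Function.Surjective f := QuotientGroup.mk'_surjective U
  set Hb := H.map f with hHb
  set Tb := T.map f with hTb
  haveI hHbn : Hb.Normal := hHn.map f hfs
  have hTbHb : Tb ≤ Hb := Subgroup.map_mono hTH
  -- cardinality of Tb
  have hcard : Nat.card Tb = (U.subgroupOf T).index := by
    have h1 : (f.comp T.subtype).range = Tb := by
      rw [MonoidHom.range_comp, Subgroup.range_subtype]
    have h2 : (f.comp T.subtype).ker = U.subgroupOf T := by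
      rw [← MonoidHom.comap_ker, QuotientGroup.ker_mk']
      rfl
    calc Nat.card Tb = Nat.card (f.comp T.subtype).range := by rw [h1]
      _ = Nat.card (T ⧸ (f.comp T.subtype).ker) :=
          (Nat.card_congr (QuotientGroup.quotientKerEquivRange _).toEquiv).symm
      _ = (U.subgroupOf T).index := by rw [h2, ← Subgroup.index_eq_card]
  have hTbcop : ∀ r ∈ π, ¬ r ∣ Nat.card Tb := by
    intro r hr
    rw [hcard]
    refine hTπ _ (hUn.subgroupOf T) ?_ r hr
    have heq : ((U.subgroupOf T : Subgroup T) : Set T) = Subtype.val ⁻¹' (U : Set G) := rfl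
    rw [heq]
    exact hUo.preimage continuous_subtype_val
  -- the law in the quotient
  have hlawQ : ∀ l' ∈ Hb, ∀ k' ∈ Hb, engel (f u * l') ((f v * k') ^ d) n = 1 := by
    rintro _ ⟨l, hl, rfl⟩ _ ⟨k, hk, rfl⟩
    rw [← map_mul, ← map_mul, ← map_pow, ← engel_map, hlaw l hl k hk, map_one]
  -- primes dividing e are in π
  set e := H.index * d with he
  have he0 : e ≠ 0 := Nat.mul_ne_zero hHind0 hd.ne'
  have hπe : ∀ p : ℕ, p.Prime → p ∣ e → p ∈ π := by
    intro p hp hpe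
    rw [hπ]
    exact ⟨hp, (Nat.Prime.dvd_mul hp).mp hpe⟩
  -- orders of elements of Tb avoid primes of e
  have hTbord : ∀ t : G ⧸ U, t ∈ Tb → ∀ p : ℕ, p.Prime → p ∣ orderOf t → ¬ p ∣ e := by
    intro t ht p hp hpt hpe
    have h1 : orderOf t ∣ Nat.card Tb := by
      have h := orderOf_dvd_natCard (⟨t, ht⟩ : Tb)
      rwa [Subgroup.orderOf_mk] at h
    exact hTbcop p (hπe p hp hpe) (hpt.trans h1)
  set C := Subgroup.centralizer ((Tb : Subgroup (G ⧸ U)) : Set (G ⧸ U)) with hC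
  -- index of Hb divides e
  have hHbind : Hb.index ∣ e := (Subgroup.index_map_dvd (H := H) hfs).trans (dvd_mul_right H.index d)
  -- decomposition of arbitrary elements
  have hdecomp : ∀ g : G ⧸ U, ∃ g1 g2 : G ⧸ U, g = g1 * g2 ∧ g1 ∈ C ∧ g2 ∈ Hb := by
    intro g
    have hgo : orderOf g ≠ 0 := (orderOf_pos g).ne'
    obtain ⟨m1, m2, hmeq, hmcop, hm1, hm2⟩ := nat_split e (orderOf g) hgo
    obtain ⟨g1, g2, hgeq, hg1, hg2⟩ := exists_decomp g m1 m2 hmcop (hmeq ▸ dvd_rfl)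
    refine ⟨g1, g2, hgeq, ?_, ?_⟩
    · rw [hC, Subgroup.mem_centralizer_iff]
      intro t ht
      have hcop : Nat.Coprime (orderOf g1) (orderOf t) := by
        by_contra hnc
        obtain ⟨r, hr, hrd⟩ := Nat.exists_prime_and_dvd hnc
        have hr1 : r ∣ orderOf g1 := hrd.trans (Nat.gcd_dvd_left _ _)
        have hr2 : r ∣ orderOf t := hrd.trans (Nat.gcd_dvd_right _ _)
        exact hTbord t ht r hr hr2 (hm1 r hr (hr1.trans hg1))
      exact (commute_coprime hnilQ (orderOf g1) g1 t dvd_rfl (orderOf_pos g1).ne' hcop).symm.eq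
    · have hg2' : ((QuotientGroup.mk' Hb) g2) = 1 := by
        by_contra hne1
        have h1 : orderOf ((QuotientGroup.mk' Hb) g2) ∣ m2 :=
          (orderOf_map_dvd _ g2).trans hg2
        have h2 : orderOf ((QuotientGroup.mk' Hb) g2) ∣ e := by
          refine dvd_trans ?_ hHbind
          rw [Subgroup.index_eq_card]
          exact orderOf_dvd_natCard _
        have hne2 : orderOf ((QuotientGroup.mk' Hb) g2) ≠ 1 := fun h =>
          hne1 (orderOf_eq_one_iff.mp h)
        obtain ⟨r, hr, hrd⟩ := Nat.exists_prime_and_dvd hne2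
        exact hm2 r hr (hrd.trans h1) (hrd.trans h2)
      exact (QuotientGroup.eq_one_iff g2).mp hg2'
  obtain ⟨a1, a2, haeq, ha1, ha2⟩ := hdecomp (f u)
  obtain ⟨b1, b2, hbeq, hb1, hb2⟩ := hdecomp (f v)
  have hyTb : f y ∈ Tb := Subgroup.mem_map_of_mem f hy
  have hxTb : f x ∈ Tb := Subgroup.mem_map_of_mem f hx
  -- extract a d-th root of f y inside Tb
  have hcopd : (Nat.card Tb).Coprime d := by
    by_contra hnc
    obtain ⟨r, hr, hrd⟩ := Nat.exists_prime_and_dvd hnc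
    exact hTbcop r
      (by rw [hπ]; exact ⟨hr, Or.inr (hrd.trans (Nat.gcd_dvd_right _ _))⟩)
      (hrd.trans (Nat.gcd_dvd_left _ _))
  set z : G ⧸ U := (((powCoprime hcopd).symm ⟨f y, hyTb⟩ : ↥Tb) : G ⧸ U) with hzdef
  have hzTb : z ∈ Tb := SetLike.coe_mem _
  have hzd : z ^ d = f y := by
    have h0 : (powCoprime hcopd) ((powCoprime hcopd).symm ⟨f y, hyTb⟩) = ⟨f y, hyTb⟩ :=
      Equiv.apply_symm_apply _ _
    have h1 := congrArg Subtype.val h0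
    rw [powCoprime_apply] at h1
    exact h1
  -- apply the law
  have hx'Hb : f x ∈ Hb := hTbHb hxTb
  have hzHb : z ∈ Hb := hTbHb hzTb
  have hk' : b2⁻¹ * z ∈ Hb := mul_mem (inv_mem hb2) hzHb
  have hbk : f v * (b2⁻¹ * z) = b1 * z := by rw [hbeq]; group
  have hbz : Commute b1 z := (Subgroup.mem_centralizer_iff.mp hb1 z hzTb).symm
  have hpow : (b1 * z) ^ d = b1 ^ d * f y := by rw [hbz.mul_pow, hzd]
  have hwC : b1 ^ d ∈ C := pow_mem hb1 d
  have hinst1 : engel (a1 * f x) ((b1 ^ d) * f y) n = 1 := by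
    have hle := hlawQ (a2⁻¹ * f x) (mul_mem (inv_mem ha2) hx'Hb) (b2⁻¹ * z) hk'
    have hl : f u * (a2⁻¹ * f x) = a1 * f x := by rw [haeq]; group
    rwa [hl, hbk, hpow] at hle
  have hinst2 : engel a1 ((b1 ^ d) * f y) n = 1 := by
    have hle := hlawQ a2⁻¹ (inv_mem ha2) (b2⁻¹ * z) hk'
    have hl : f u * a2⁻¹ = a1 := by rw [haeq]; group
    rwa [hl, hbk, hpow] at hle
  obtain ⟨hs1, _, _⟩ := engel_split Tb ha1 hwC hxTb hyTb n
  obtain ⟨hs2, _, _⟩ := engel_split Tb ha1 hwC (one_mem Tb) hyTb n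
  have hA1 : engel a1 (b1 ^ d) n = 1 := by
    have h := hinst2
    rw [show a1 = a1 * 1 by rw [mul_one]] at h
    rw [hs2, engel_one_left, mul_one] at h
    exact h
  have hfinal : engel (f x) (f y) n = 1 := by
    have h := hinst1
    rw [hs1, hA1, one_mul] at h
    exact h
  have : f (engel x y n) = 1 := by rw [engel_map]; exact hfinal
  exact (QuotientGroup.eq_one_iff _).mp this
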